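/- arXiv:1908.06428 — 2 statements merged into one kernel-verified Lean document; each statement's English description precedes it below -/
import Mathlib

section
/- For every k ≥ 2, let m_k = 2^{k-⌈log₂ k⌉} − ⌈log₂ k⌉, let u_k = (∏_{j=0}^{k-2} bin_k(j) a^{m_k}) bin_k(k-1) where bin_k(j) ∈ {0,1}^{⌈log₂ k⌉} is the binary representation of j padded with leading zeros, and let s_k = (u_k a^{m_k+1})^{m_k} u_k over the alphabet {0,1,a}. Then g(s_k) ≤ C·k for some absolute constant C. -/
/-- A straight-line program over alphabet `α`, in topologically-sorted form:
nonterminals are `Fin n`, each has exactly one nonempty right-hand side, and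
right-hand sides only refer to strictly smaller nonterminals (acyclicity). -/
structure SLP (α : Type) where
  n : ℕ
  rhs : Fin n → List (α ⊕ Fin n)
  rhs_ne : ∀ i, rhs i ≠ []
  acyc : ∀ i j, Sum.inr j ∈ rhs i → (j : ℕ) < (i : ℕ)
  start : Fin n

namespace SLP

variable {α : Type}

/-- The word produced by nonterminal `i`. -/
def valAux (G : SLP α) (i : Fin G.n) : List α :=
  (G.rhs i).attach.flatMap (fun s =>
    match s with
    | ⟨Sum.inl a, _⟩ => [a]
    | ⟨Sum.inr j, hj⟩ => G.valAux j)
termination_by (i : ℕ)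
decreasing_by exact G.acyc i j hj

/-- The word produced by the SLP. -/
def val (G : SLP α) : List α := G.valAux G.start

/-- The size of the SLP: sum of lengths of all right-hand sides. -/
def size (G : SLP α) : ℕ := ∑ i : Fin G.n, (G.rhs i).length

end SLP

/-- `g w`: the minimal size of an SLP producing `w`. -/
noncomputable def g {α : Type} (w : List α) : ℕ :=
  sInf { s | ∃ G : SLP α, G.size = s ∧ G.val = w }

-- The alphabet `{0, 1, a}` is modelled as `Fin 3`, with `a := (2 : Fin 3)`.
/-- `binpad L j` : the binary representation of `j`, padded with leading zeros to
`L` digits (most significant digit first), as a word over `{0,1} ⊆ Fin 3`. -/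
def binpad (L j : ℕ) : List (Fin 3) :=
  (List.range L).map (fun t => if Nat.testBit j (L - 1 - t) then (1 : Fin 3) else 0)

/-- `mk k = 2^{k - ⌈log₂ k⌉} - ⌈log₂ k⌉`. -/
def mk' (k : ℕ) : ℕ := 2 ^ (k - Nat.clog 2 k) - Nat.clog 2 k

/-- `uk k = (∏_{j=0}^{k-2} bin_k(j) a^{m_k}) bin_k(k-1)`. -/
def uk (k : ℕ) : List (Fin 3) :=
  ((List.range (k - 1)).map
      (fun j => binpad (Nat.clog 2 k) j ++ List.replicate (mk' k) 2)).flatten ++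
    binpad (Nat.clog 2 k) (k - 1)

/-- `sk k = (u_k a^{m_k+1})^{m_k} u_k`. -/
def sk (k : ℕ) : List (Fin 3) :=
  (List.replicate (mk' k) (uk k ++ List.replicate (mk' k + 1) 2)).flatten ++ uk k

abbrev Blk := List (Fin 3 ⊕ ℕ)
abbrev Prog := List Blk

def evalP (P : Prog) (i : ℕ) : List (Fin 3) :=
  (P.getD i []).attach.flatMap (fun s =>
    match s with
    | ⟨Sum.inl a, _⟩ => [a]
    | ⟨Sum.inr j, _⟩ => if h : j < i then evalP P j else [])
termination_by i
decreasing_by exact h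

def sden (P : Prog) (i : ℕ) : (Fin 3 ⊕ ℕ) → List (Fin 3)
  | .inl a => [a]
  | .inr j => if j < i then evalP P j else []

lemma attach_bind_eq {α β : Type*} (l : List α) (F : {x // x ∈ l} → List β)
    (F' : α → List β) (h : ∀ s : {x // x ∈ l}, F s = F' s.1) :
    l.attach.flatMap F = l.flatMap F' := by
  calc l.attach.flatMap F = l.attach.flatMap (fun s => F' s.1) := by
        apply List.flatMap_congr; intro s _; exact h s
    _ = (l.attach.map Subtype.val).flatMap F' := by rw [List.flatMap_map]
    _ = l.flatMap F' := by rw [List.attach_map_subtype_val]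

lemma evalP_eq (P : Prog) (i : ℕ) :
    evalP P i = (P.getD i []).flatMap (sden P i) := by
  rw [evalP]
  apply attach_bind_eq
  rintro ⟨s | j, hs⟩
  · rfl
  · simp only [sden]
    split <;> rename_i h <;> simp [h]


def Wf (P : Prog) : Prop := ∀ i j, Sum.inr j ∈ P.getD i [] → j < i
def NE (P : Prog) : Prop := ∀ b ∈ P, b ≠ []
def Good (P : Prog) : Prop := Wf P ∧ NE P
def sizeSum (P : Prog) : ℕ := (P.map List.length).sum

lemma getD_prefix {P Q : Prog} (h : P <+: Q) {i : ℕ} (hi : i < P.length) :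
    Q.getD i [] = P.getD i [] := by
  obtain ⟨R, rfl⟩ := h
  rw [List.getD_eq_getElem _ _ hi, List.getD_eq_getElem _ _ (by simp; omega),
    List.getElem_append_left hi]

lemma evalP_prefix {P Q : Prog} (h : P <+: Q) : ∀ {i : ℕ}, i < P.length →
    evalP Q i = evalP P i := by
  intro i
  induction i using Nat.strong_induction_on with
  | _ i IH =>
    intro hi
    rw [evalP_eq, evalP_eq, getD_prefix h hi]
    apply List.flatMap_congr
    rintro (a | j) _
    · rfl
    · simp only [sden]
      split <;> rename_i hj
      · exact IH j hj (lt_trans hj hi)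
      · rfl

lemma getD_snoc_self (P : Prog) (b : Blk) : (P ++ [b]).getD P.length [] = b := by
  rw [List.getD_eq_getElem _ _ (by simp), List.getElem_append_right (le_refl _)]
  simp

lemma wf_snoc {P : Prog} (hP : Wf P) {b : Blk} (hb : ∀ j, Sum.inr j ∈ b → j < P.length) :
    Wf (P ++ [b]) := by
  intro i j hj
  rcases lt_trichotomy i P.length with h | h | h
  · rw [getD_prefix (List.prefix_append P [b]) h] at hj
    exact hP i j hj
  · subst h; rw [getD_snoc_self] at hj; exact hb j hj
  · rw [List.getD_eq_default _ _ (by simp; omega)] at hj; cases hj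

lemma ne_snoc {P : Prog} (hP : NE P) {b : Blk} (hb : b ≠ []) : NE (P ++ [b]) := by
  intro c hc
  rcases List.mem_append.mp hc with h | h
  · exact hP c h
  · simp at h; subst h; exact hb

lemma good_snoc {P : Prog} (hP : Good P) {b : Blk} (hb : b ≠ [])
    (hb' : ∀ j, Sum.inr j ∈ b → j < P.length) : Good (P ++ [b]) :=
  ⟨wf_snoc hP.1 hb', ne_snoc hP.2 hb⟩

lemma sizeSum_snoc (P : Prog) (b : Blk) : sizeSum (P ++ [b]) = sizeSum P + b.length := by
  simp [sizeSum]

lemma evalP_snoc {P : Prog} {b : Blk} (hb : ∀ j, Sum.inr j ∈ b → j < P.length) :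
    evalP (P ++ [b]) P.length = b.flatMap (fun s => match s with
      | .inl a => [a] | .inr j => evalP P j) := by
  rw [evalP_eq, getD_snoc_self]
  apply List.flatMap_congr
  rintro (a | j) hs
  · rfl
  · have hj := hb j hs
    simp only [sden, if_pos hj]
    exact evalP_prefix (List.prefix_append P [b]) hj
lemma SLP.valAux_eq {α : Type} (G : SLP α) (i : Fin G.n) :
    G.valAux i = (G.rhs i).flatMap (fun s => match s with
      | .inl a => [a] | .inr j => G.valAux j) := by
  rw [SLP.valAux]
  apply attach_bind_eq
  rintro ⟨s | j, hs⟩ <;> rfl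

def toSLP (P : Prog) (hG : Good P) (hP : 0 < P.length) : SLP (Fin 3) where
  n := P.length
  rhs := fun v => (P.getD v []).map (fun s => match s with
    | .inl a => .inl a
    | .inr j => .inr (if h : j < P.length then (⟨j, h⟩ : Fin P.length) else v))
  rhs_ne := by
    intro v
    have : P.getD v [] = P[(v : ℕ)] := List.getD_eq_getElem _ _ v.2
    intro hcon
    rw [List.map_eq_nil_iff] at hcon
    exact hG.2 _ (this ▸ List.getElem_mem v.2) (this ▸ hcon)
  acyc := by
    intro i j hj
    rcases List.mem_map.mp hj with ⟨s, hs, hconv⟩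
    rcases s with a | j₀
    · simp at hconv
    · have hj₀ : j₀ < (i : ℕ) := hG.1 i j₀ hs
      have hlt : j₀ < P.length := lt_trans hj₀ i.2
      simp only [dif_pos hlt] at hconv
      have : j = ⟨j₀, hlt⟩ := (Sum.inr.inj hconv).symm
      subst this
      exact hj₀
  start := ⟨P.length - 1, by omega⟩

lemma toSLP_valAux (P : Prog) (hG : Good P) (hP : 0 < P.length) :
    ∀ (i : ℕ) (h : i < P.length), (toSLP P hG hP).valAux ⟨i, h⟩ = evalP P i := by
  intro i
  induction i using Nat.strong_induction_on with
  | _ i IH =>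
    intro hi
    rw [SLP.valAux_eq, evalP_eq]
    show (List.map _ _).flatMap _ = _
    refine (List.flatMap_map _ _ _).trans ?_
    apply List.flatMap_congr
    rintro (a | j) hs
    · rfl
    · have hj : j < i := hG.1 i j hs
      have hjl : j < P.length := lt_trans hj hi
      simp only [dif_pos hjl, sden, if_pos hj]
      exact (congrArg (toSLP P hG hP).valAux (dif_pos hjl)).trans (IH j hj hjl)

lemma toSLP_size (P : Prog) (hG : Good P) (hP : 0 < P.length) :
    (toSLP P hG hP).size = sizeSum P := by
  show (∑ i : Fin P.length, (List.map _ (P.getD i [])).length) = _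
  have h1 : ∀ i : Fin P.length, (List.map (fun s => match s with
      | Sum.inl a => (Sum.inl a : Fin 3 ⊕ Fin P.length)
      | Sum.inr j => Sum.inr (if h : j < P.length then (⟨j, h⟩ : Fin P.length) else i))
        (P.getD i [])).length = (P.get i).length := by
    intro i
    rw [List.length_map, List.getD_eq_getElem _ _ i.2]
    rfl
  calc (∑ i : Fin P.length, (List.map _ (P.getD i [])).length)
      = ∑ i : Fin P.length, (P.get i).length := by
        apply Finset.sum_congr rfl; intro i _; exact h1 i
    _ = ((List.finRange P.length).map (fun i => (P.get i).length)).sum := Fin.sum_univ_def _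
    _ = (((List.finRange P.length).map P.get).map List.length).sum := by rw [List.map_map]; rfl
    _ = sizeSum P := by rw [List.map_get_finRange]; rfl

lemma g_le_prog (P : Prog) (hG : Good P) (hP : 0 < P.length) :
    g (evalP P (P.length - 1)) ≤ sizeSum P := by
  apply Nat.sInf_le
  exact ⟨toSLP P hG hP, toSLP_size P hG hP,
    toSLP_valAux P hG hP (P.length - 1) (by omega)⟩
/-! ### Literal programs -/

lemma g_le_length {w : List (Fin 3)} (hw : w ≠ []) : g w ≤ w.length := by
  have hP : Good [w.map Sum.inl] := by
    constructor
    · intro i j hj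
      rcases Nat.eq_zero_or_pos i with h | h
      · subst h
        have he : ([w.map Sum.inl] : Prog).getD 0 [] = w.map Sum.inl := rfl
        rw [he] at hj
        rcases List.mem_map.mp hj with ⟨a, -, hc⟩
        cases hc
      · rw [List.getD_eq_default _ _ (by simp; omega)] at hj; cases hj
    · intro b hb
      simp at hb; subst hb; simpa using hw
  have := g_le_prog [w.map Sum.inl] hP (by simp)
  simpa [sizeSum, evalP_eq, List.getD, sden, List.flatMap_map,
    List.flatMap_singleton'] using this

/-! ### Powering -/

def powExt (P : Prog) (b : ℕ) : ℕ → Prog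
  | m =>
    if h : m ≤ 1 then P ++ [[.inr b]]
    else
      powExt P b (m / 2) ++
        [if m % 2 = 0 then
          [.inr ((powExt P b (m / 2)).length - 1), .inr ((powExt P b (m / 2)).length - 1)]
        else
          [.inr ((powExt P b (m / 2)).length - 1), .inr ((powExt P b (m / 2)).length - 1),
            .inr b]]
  termination_by m => m
  decreasing_by exact Nat.div_lt_self (by omega) (by omega)

lemma join_replicate_add {α : Type} (a c : ℕ) (w : List α) :
    (List.replicate a w).flatten ++ (List.replicate c w).flatten
      = (List.replicate (a + c) w).flatten := by
  rw [← List.flatten_append, ← List.replicate_add]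

lemma powExt_spec (P : Prog) (b : ℕ) (hb : b < P.length) (hG : Good P) :
    ∀ m : ℕ, 1 ≤ m →
      P <+: powExt P b m ∧ Good (powExt P b m) ∧ P.length < (powExt P b m).length ∧
      evalP (powExt P b m) ((powExt P b m).length - 1)
        = (List.replicate m (evalP P b)).flatten := by
  intro m
  induction m using Nat.strong_induction_on with
  | _ m IH =>
    intro hm
    by_cases h1 : m ≤ 1
    · have hm1 : m = 1 := by omega
      subst hm1
      rw [powExt, dif_pos (by omega)]
      refine ⟨List.prefix_append _ _, good_snoc hG (by simp) ?_, by simp, ?_⟩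
      · intro j hj; simp at hj; omega
      · have hlen : (P ++ [[Sum.inr b]]).length - 1 = P.length := by simp
        rw [hlen, evalP_snoc (by intro j hj; simp at hj; omega)]
        simp
    · push_neg at h1
      have hrec := IH (m / 2) (Nat.div_lt_self (by omega) (by omega)) (by omega)
      obtain ⟨hpre, hgood, hlen, heval⟩ := hrec
      set Q := powExt P b (m / 2) with hQ
      set t := Q.length - 1 with ht
      have htlt : t < Q.length := by omega
      have hblt : b < Q.length := by omega
      set blk : Blk := if m % 2 = 0 then [.inr t, .inr t] else [.inr t, .inr t, .inr b]
        with hblk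
      have hrefs : ∀ j, Sum.inr j ∈ blk → j < Q.length := by
        intro j hj
        rw [hblk] at hj
        split at hj <;> simp at hj <;> omega
      have hne : blk ≠ [] := by rw [hblk]; split <;> simp
      have hstep : powExt P b m = Q ++ [blk] := by
        rw [powExt, dif_neg (by omega)]
      rw [hstep]
      refine ⟨hpre.trans (List.prefix_append _ _), good_snoc hgood hne hrefs,
        by simp only [List.length_append, List.length_singleton]; omega, ?_⟩
      have hlast : (Q ++ [blk]).length - 1 = Q.length := by simp
      rw [hlast, evalP_snoc hrefs, hblk]
      have hbQ : evalP Q b = evalP P b := evalP_prefix hpre hb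
      by_cases hpar : m % 2 = 0
      · rw [if_pos hpar]
        show evalP Q t ++ (evalP Q t ++ []) = _
        rw [heval, List.append_nil, join_replicate_add]
        have h2 : m / 2 + m / 2 = m := by omega
        rw [h2]
      · rw [if_neg hpar]
        show evalP Q t ++ (evalP Q t ++ (evalP Q b ++ [])) = _
        rw [heval, List.append_nil, hbQ]
        calc (List.replicate (m / 2) (evalP P b)).flatten ++
              ((List.replicate (m / 2) (evalP P b)).flatten ++ evalP P b)
            = ((List.replicate (m / 2) (evalP P b)).flatten ++
                (List.replicate (m / 2) (evalP P b)).flatten) ++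
                  (List.replicate 1 (evalP P b)).flatten := by simp
          _ = (List.replicate (m / 2 + m / 2 + 1) (evalP P b)).flatten := by
                rw [join_replicate_add, join_replicate_add]
          _ = (List.replicate m (evalP P b)).flatten := by
                have h2 : m / 2 + m / 2 + 1 = m := by omega
                rw [h2]

lemma powExt_size (P : Prog) (b : ℕ) :
    ∀ (n m : ℕ), m < 2 ^ n → sizeSum (powExt P b m) ≤ sizeSum P + 3 * n + 1 := by
  intro n
  induction n with
  | zero =>
    intro m hm
    have hm0 : m = 0 := by omega
    subst hm0
    rw [powExt, dif_pos (by omega), sizeSum_snoc]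
    simp
  | succ n IH =>
    intro m hm
    by_cases h1 : m ≤ 1
    · rw [powExt, dif_pos h1, sizeSum_snoc]
      simp
    · rw [powExt, dif_neg h1, sizeSum_snoc]
      have := IH (m / 2) (by omega)
      have hlb : (if m % 2 = 0 then ([.inr (((powExt P b (m/2)).length - 1) : ℕ),
          .inr ((powExt P b (m/2)).length - 1)] : Blk)
        else [.inr ((powExt P b (m/2)).length - 1), .inr ((powExt P b (m/2)).length - 1),
          .inr b]).length ≤ 3 := by split <;> simp
      omega
/-! ### The counting word -/

lemma join_eq_flatten {α : Type} (l : List (List α)) : l.flatten = l.flatten := rfl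

def Ww (l c : ℕ) (t : List (Fin 3)) : List (Fin 3) :=
  ((List.range (c - 1)).map (fun j => binpad l j ++ t)).flatten ++ binpad l (c - 1)

lemma uk_eq_Ww (k : ℕ) : uk k = Ww (Nat.clog 2 k) k (List.replicate (mk' k) 2) := by
  rw [uk, Ww, join_eq_flatten]

lemma binpad_succ_lt {l j : ℕ} (hj : j < 2 ^ l) :
    binpad (l + 1) j = 0 :: binpad l j := by
  rw [binpad, List.range_succ_eq_map, List.map_cons]
  congr 1
  · simp [Nat.testBit_lt_two_pow hj]
  · rw [List.map_map, binpad]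
    apply List.map_congr_left
    intro t ht
    have h : l + 1 - 1 - Nat.succ t = l - 1 - t := by omega
    simp only [Function.comp, h]

lemma binpad_succ_ge {l j : ℕ} (h1 : 2 ^ l ≤ j) (h2 : j < 2 ^ (l + 1)) :
    binpad (l + 1) j = 1 :: binpad l (j - 2 ^ l) := by
  have hdiv : j / 2 ^ l = 1 :=
    Nat.div_eq_of_lt_le (by simpa using h1) (by rw [show (1+1)*2^l = 2^(l+1) by ring]; exact h2)
  have hm : j - 2 ^ l = j % 2 ^ l := by
    have := Nat.mod_add_div j (2 ^ l)
    rw [hdiv] at this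
    omega
  rw [binpad, List.range_succ_eq_map, List.map_cons]
  congr 1
  · have hb : Nat.testBit j (l + 1 - 1 - 0) = true := by
      have h : l + 1 - 1 - 0 = l := by omega
      rw [h, Nat.testBit_eq_decide_div_mod_eq, hdiv]
      rfl
    rw [hb]
    rfl
  · rw [List.map_map, binpad]
    apply List.map_congr_left
    intro t ht
    simp only [Function.comp]
    have h : l + 1 - 1 - Nat.succ t = l - 1 - t := by omega
    rw [h]
    have hs : l - 1 - t < l := by
      simp only [List.mem_range] at ht
      omega
    rw [hm, Nat.testBit_mod_two_pow]
    simp [hs]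

lemma aux_join {α : Type} (w : ℕ → List α) (x : α) (t : List α) :
    ∀ d : ℕ, ((List.range d).map (fun j => (x :: w j) ++ t)).flatten ++ (x :: w d)
      = x :: (((List.range d).map (fun j => w j ++ (t ++ [x]))).flatten ++ w d) := by
  intro d
  induction d with
  | zero => simp
  | succ d IH =>
    rw [List.range_succ]
    simp only [List.map_append, List.flatten_append, List.map_cons, List.map_nil,
      List.flatten_cons, List.flatten_nil, List.append_nil]
    calc (((List.range d).map (fun j => (x :: w j) ++ t)).flatten ++ ((x :: w d) ++ t))
          ++ (x :: w (d + 1))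
        = (((List.range d).map (fun j => (x :: w j) ++ t)).flatten ++ (x :: w d))
            ++ (t ++ (x :: w (d + 1))) := by
          simp [List.append_assoc]
      _ = (x :: (((List.range d).map (fun j => w j ++ (t ++ [x]))).flatten ++ w d))
            ++ (t ++ (x :: w (d + 1))) := by rw [IH]
      _ = x :: ((((List.range d).map (fun j => w j ++ (t ++ [x]))).flatten
            ++ (w d ++ (t ++ [x]))) ++ w (d + 1)) := by
          simp [List.append_assoc]

lemma Ww_succ_le {l c : ℕ} (hc1 : 1 ≤ c) (hc2 : c ≤ 2 ^ l) (t : List (Fin 3)) :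
    Ww (l + 1) c t = 0 :: Ww l c (t ++ [0]) := by
  rw [Ww, Ww]
  have hmap : (List.range (c - 1)).map (fun j => binpad (l + 1) j ++ t)
      = (List.range (c - 1)).map (fun j => (0 :: binpad l j) ++ t) := by
    apply List.map_congr_left
    intro j hj
    simp only [List.mem_range] at hj
    rw [binpad_succ_lt (by omega)]
  rw [hmap, binpad_succ_lt (by omega)]
  exact aux_join (binpad l) 0 t (c - 1)

lemma Ww_succ_gt {l c : ℕ} (hc1 : 2 ^ l < c) (hc2 : c ≤ 2 ^ (l + 1)) (t : List (Fin 3)) :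
    Ww (l + 1) c t
      = ((0 :: Ww l (2 ^ l) (t ++ [0])) ++ t) ++ (1 :: Ww l (c - 2 ^ l) (t ++ [1])) := by
  have hp : 0 < 2 ^ l := Nat.pow_pos (by omega)
  set c' := c - 2 ^ l with hc'
  have hc'1 : 1 ≤ c' := by omega
  have hc'2 : c' ≤ 2 ^ l := by
    have : 2 ^ (l + 1) = 2 ^ l + 2 ^ l := by ring
    omega
  have hsplit : c - 1 = 2 ^ l + (c' - 1) := by omega
  rw [Ww, hsplit, List.range_add, List.map_append, List.flatten_append, List.map_map]
  -- first part
  have hA : ((List.range (2 ^ l)).map (fun j => binpad (l + 1) j ++ t)).flatten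
      = (0 :: Ww l (2 ^ l) (t ++ [0])) ++ t := by
    have hmap : (List.range (2 ^ l)).map (fun j => binpad (l + 1) j ++ t)
        = (List.range (2 ^ l)).map (fun j => (0 :: binpad l j) ++ t) := by
      apply List.map_congr_left
      intro j hj
      simp only [List.mem_range] at hj
      rw [binpad_succ_lt hj]
    rw [hmap, show 2 ^ l = (2 ^ l - 1) + 1 by omega, List.range_succ, List.map_append,
      List.flatten_append]
    simp only [List.map_cons, List.map_nil, List.flatten_cons, List.flatten_nil, List.append_nil]
    rw [← List.append_assoc, aux_join (binpad l) 0 t (2 ^ l - 1)]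
    rw [Ww]
    simp
  -- second part
  have hB : ((List.range (c' - 1)).map ((fun j => binpad (l + 1) j ++ t) ∘ (fun x => 2 ^ l + x))).flatten
        ++ binpad (l + 1) (2 ^ l + (c' - 1))
      = 1 :: Ww l c' (t ++ [1]) := by
    have hmap : (List.range (c' - 1)).map ((fun j => binpad (l + 1) j ++ t) ∘ (fun x => 2 ^ l + x))
        = (List.range (c' - 1)).map (fun r => (1 :: binpad l r) ++ t) := by
      apply List.map_congr_left
      intro r hr
      simp only [List.mem_range, Function.comp] at hr ⊢
      rw [binpad_succ_ge (by omega) (by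
        have : 2 ^ (l + 1) = 2 ^ l + 2 ^ l := by ring
        omega)]
      simp
    have hlast : binpad (l + 1) (2 ^ l + (c' - 1)) = 1 :: binpad l (c' - 1) := by
      rw [binpad_succ_ge (by omega) (by
        have : 2 ^ (l + 1) = 2 ^ l + 2 ^ l := by ring
        omega)]
      simp
    rw [hmap, hlast, aux_join (binpad l) 1 t (c' - 1), Ww]
  rw [List.append_assoc, hB, hA]
/-! ### Building the counting word -/

def wBuild : ℕ → ℕ → ℕ → Prog → Prog × ℕ
  | 0, _, _, P => (P ++ [[.inl 0]], P.length)
  | 1, c, t, P =>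
      if c ≤ 1 then (P ++ [[.inl 0]], P.length)
      else (P ++ [[.inl 0, .inr t, .inl 1]], P.length)
  | (l + 2), c, t, P =>
      if c ≤ 2 ^ (l + 1) then
        ((wBuild (l + 1) c P.length (P ++ [[.inr t, .inl 0]])).1
            ++ [[.inl 0, .inr (wBuild (l + 1) c P.length (P ++ [[.inr t, .inl 0]])).2]],
          (wBuild (l + 1) c P.length (P ++ [[.inr t, .inl 0]])).1.length)
      else
        ((wBuild (l + 1) (c - 2 ^ (l + 1))
              (wBuild (l + 1) (2 ^ (l + 1)) P.length (P ++ [[.inr t, .inl 0]])).1.length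
              ((wBuild (l + 1) (2 ^ (l + 1)) P.length (P ++ [[.inr t, .inl 0]])).1
                ++ [[.inr t, .inl 1]])).1
            ++ [[.inl 0,
                .inr (wBuild (l + 1) (2 ^ (l + 1)) P.length (P ++ [[.inr t, .inl 0]])).2,
                .inr t, .inl 1,
                .inr (wBuild (l + 1) (c - 2 ^ (l + 1))
                  (wBuild (l + 1) (2 ^ (l + 1)) P.length (P ++ [[.inr t, .inl 0]])).1.length
                  ((wBuild (l + 1) (2 ^ (l + 1)) P.length (P ++ [[.inr t, .inl 0]])).1
                    ++ [[.inr t, .inl 1]])).2]],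
          (wBuild (l + 1) (c - 2 ^ (l + 1))
            (wBuild (l + 1) (2 ^ (l + 1)) P.length (P ++ [[.inr t, .inl 0]])).1.length
            ((wBuild (l + 1) (2 ^ (l + 1)) P.length (P ++ [[.inr t, .inl 0]])).1
              ++ [[.inr t, .inl 1]])).1.length)

lemma Ww_one_one (t : List (Fin 3)) : Ww 1 1 t = [0] := by
  simp [Ww, binpad, Nat.zero_testBit]

lemma Ww_one_two (t : List (Fin 3)) : Ww 1 2 t = [0] ++ (t ++ [1]) := by
  have h0 : binpad 1 0 = [0] := by simp [binpad, Nat.zero_testBit]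
  have h1 : binpad 1 1 = [1] := by
    have : Nat.testBit 1 0 = true := rfl
    simp [binpad, this]
  have hr : List.range 1 = [0] := rfl
  simp [Ww, h0, h1, hr]

lemma wBuild_spec :
    ∀ (l : ℕ), 1 ≤ l → ∀ (c t : ℕ) (P : Prog), 1 ≤ c → c ≤ 2 ^ l → Good P → t < P.length →
      P <+: (wBuild l c t P).1 ∧
      P.length ≤ (wBuild l c t P).2 ∧
      (wBuild l c t P).2 < (wBuild l c t P).1.length ∧
      Good (wBuild l c t P).1 ∧
      evalP (wBuild l c t P).1 (wBuild l c t P).2 = Ww l c (evalP P t) ∧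
      sizeSum (wBuild l c t P).1 ≤ sizeSum P + 12 * c + 9 * l ∧
      (c = 2 ^ l → sizeSum (wBuild l c t P).1 + 9 ≤ sizeSum P + 12 * c) := by
  intro l
  induction l with
  | zero => omega
  | succ n IH =>
    intro _ c t P hc1 hc2 hG ht
    cases n with
    | zero =>
      -- l = 1
      by_cases hcle : c ≤ 1
      · have hc : c = 1 := by omega
        subst hc
        rw [wBuild, if_pos (by omega)]
        have hrefs : ∀ j, Sum.inr j ∈ ([.inl 0] : Blk) → j < P.length := by
          intro j hj; simp at hj
        refine ⟨List.prefix_append _ _, le_refl _, by simp, good_snoc hG (by simp) hrefs, ?_, ?_, ?_⟩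
        · rw [evalP_snoc hrefs, Ww_one_one]
          rfl
        · rw [sizeSum_snoc]; simp only [List.length_cons, List.length_nil]; omega
        · intro hfull; omega
      · have hc : c = 2 := by omega
        subst hc
        rw [wBuild, if_neg (by omega)]
        have hrefs : ∀ j, Sum.inr j ∈ ([.inl 0, .inr t, .inl 1] : Blk) → j < P.length := by
          intro j hj; simp at hj; omega
        refine ⟨List.prefix_append _ _, le_refl _, by simp, good_snoc hG (by simp) hrefs, ?_, ?_, ?_⟩
        · rw [evalP_snoc hrefs, Ww_one_two]
          show [(0 : Fin 3)] ++ (evalP P t ++ ([1] ++ [])) = _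
          simp
        · rw [sizeSum_snoc]; simp only [List.length_cons, List.length_nil]; omega
        · intro hfull; rw [sizeSum_snoc]; simp only [List.length_cons, List.length_nil]; omega
    | succ m =>
      -- l = m + 2
      have hIH := IH (by omega)
      have hpow : 2 ^ (m + 2) = 2 ^ (m + 1) + 2 ^ (m + 1) := by ring
      have hpos : 1 ≤ 2 ^ (m + 1) := Nat.one_le_two_pow
      set P1 : Prog := P ++ [[.inr t, .inl 0]] with hP1
      have hGood1 : Good P1 := good_snoc hG (by simp) (by intro j hj; simp at hj; omega)
      have hlen1 : P.length < P1.length := by simp [hP1]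
      have hevalsep0 : evalP P1 P.length = evalP P t ++ [0] := by
        rw [hP1, evalP_snoc (by intro j hj; simp at hj; omega)]
        show evalP P t ++ ([0] ++ []) = _
        simp
      by_cases hbr : c ≤ 2 ^ (m + 1)
      · obtain ⟨s_pre, s_le, s_lt, s_good, s_eval, s_size, _⟩ :=
          hIH c P.length P1 hc1 hbr hGood1 hlen1
        set r := wBuild (m + 1) c P.length P1 with hr
        have hstep : wBuild (m + 2) c t P
            = (r.1 ++ [[.inl 0, .inr r.2]], r.1.length) := by
          rw [wBuild, if_pos hbr]
        rw [hstep]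
        have hrefs : ∀ j, Sum.inr j ∈ ([.inl 0, .inr r.2] : Blk) → j < r.1.length := by
          intro j hj; simp at hj; omega
        have hPpre : P <+: r.1 := (List.prefix_append _ _).trans s_pre
        refine ⟨hPpre.trans (List.prefix_append _ _), ?_, by simp, good_snoc s_good (by simp) hrefs,
          ?_, ?_, ?_⟩
        · show P.length ≤ r.1.length
          have := hPpre.length_le
          omega
        · show evalP (r.1 ++ _) r.1.length = _
          rw [evalP_snoc hrefs]
          show [(0 : Fin 3)] ++ (evalP r.1 r.2 ++ []) = _
          rw [List.append_nil, s_eval, hevalsep0, Ww_succ_le hc1 hbr]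
          rfl
        · rw [sizeSum_snoc]
          have h1 : sizeSum P1 = sizeSum P + 2 := by rw [hP1, sizeSum_snoc]; rfl
          simp only [List.length_cons, List.length_nil]
          omega
        · intro hfull
          rw [hfull] at hbr
          omega
      · push_neg at hbr
        obtain ⟨s1_pre, s1_le, s1_lt, s1_good, s1_eval, s1_size, s1_full⟩ :=
          hIH (2 ^ (m + 1)) P.length P1 hpos (le_refl _) hGood1 hlen1
        set r1 := wBuild (m + 1) (2 ^ (m + 1)) P.length P1 with hr1
        set P2 : Prog := r1.1 ++ [[.inr t, .inl 1]] with hP2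
        have htr1 : t < r1.1.length := by
          have := s1_pre.length_le
          omega
        have hGood2 : Good P2 := good_snoc s1_good (by simp) (by intro j hj; simp at hj; omega)
        have hlen2 : r1.1.length < P2.length := by simp [hP2]
        obtain ⟨s2_pre, s2_le, s2_lt, s2_good, s2_eval, s2_size, s2_full⟩ :=
          hIH (c - 2 ^ (m + 1)) r1.1.length P2 (by omega) (by omega) hGood2 hlen2
        set r2 := wBuild (m + 1) (c - 2 ^ (m + 1)) r1.1.length P2 with hr2
        have hstep : wBuild (m + 2) c t P
            = (r2.1 ++ [[.inl 0, .inr r1.2, .inr t, .inl 1, .inr r2.2]], r2.1.length) := by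
          rw [wBuild, if_neg (by omega)]
        rw [hstep]
        have hr12 : r1.1.length ≤ r2.1.length := by
          have := s2_pre.length_le
          simp [hP2] at this
          omega
        have hrefs : ∀ j, Sum.inr j ∈ ([.inl 0, .inr r1.2, .inr t, .inl 1, .inr r2.2] : Blk)
            → j < r2.1.length := by
          intro j hj; simp at hj
          rcases hj with h | h | h <;> omega
        have hPpre : P <+: r2.1 :=
          ((List.prefix_append _ _).trans s1_pre).trans ((List.prefix_append _ _).trans s2_pre)
        have hr1pre : r1.1 <+: r2.1 := (List.prefix_append _ _).trans s2_pre
        have hevalsep1 : evalP P2 r1.1.length = evalP P t ++ [1] := by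
          rw [hP2, evalP_snoc (by intro j hj; simp at hj; omega)]
          show evalP r1.1 t ++ ([1] ++ []) = _
          rw [evalP_prefix ((List.prefix_append _ _).trans s1_pre) ht]
          simp
        refine ⟨hPpre.trans (List.prefix_append _ _), ?_, by simp,
          good_snoc s2_good (by simp) hrefs, ?_, ?_, ?_⟩
        · show P.length ≤ r2.1.length
          have := hPpre.length_le
          omega
        · show evalP (r2.1 ++ _) r2.1.length = _
          rw [evalP_snoc hrefs]
          show [(0 : Fin 3)] ++ (evalP r2.1 r1.2 ++ (evalP r2.1 t ++ ([1] ++ (evalP r2.1 r2.2 ++ [])))) = _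
          rw [evalP_prefix hr1pre s1_lt, evalP_prefix hPpre ht, s1_eval, s2_eval,
            hevalsep0, hevalsep1, Ww_succ_gt hbr (by omega)]
          simp [List.append_assoc]
        · rw [sizeSum_snoc]
          have h1 : sizeSum P1 = sizeSum P + 2 := by rw [hP1, sizeSum_snoc]; rfl
          have h2 : sizeSum P2 = sizeSum r1.1 + 2 := by rw [hP2, sizeSum_snoc]; rfl
          have h3 := s1_full rfl
          simp only [List.length_cons, List.length_nil]
          omega
        · intro hfull
          have h1 : sizeSum P1 = sizeSum P + 2 := by rw [hP1, sizeSum_snoc]; rfl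
          have h2 : sizeSum P2 = sizeSum r1.1 + 2 := by rw [hP2, sizeSum_snoc]; rfl
          have h3 := s1_full rfl
          have h4 := s2_full (by omega)
          rw [sizeSum_snoc]
          simp only [List.length_cons, List.length_nil]
          omega
/-! ### Assembly -/

lemma clog2_eq {k c : ℕ} (hc : 1 ≤ c) (h1 : 2 ^ (c - 1) < k) (h2 : k ≤ 2 ^ c) :
    Nat.clog 2 k = c := by
  have ha : Nat.clog 2 k ≤ c := (Nat.clog_le_iff_le_pow (by norm_num)).2 h2
  have hb : c - 1 < Nat.clog 2 k := (Nat.lt_clog_iff_pow_lt (by norm_num)).2 h1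
  omega

lemma flatten_replicate_singleton {α : Type} (m : ℕ) (x : α) :
    (List.replicate m [x]).flatten = List.replicate m x := by
  induction m with
  | zero => rfl
  | succ m IH => simp [List.replicate_succ, IH]

lemma base_good : Good [[Sum.inl 2]] := by
  constructor
  · intro i j hj
    rcases Nat.eq_zero_or_pos i with h | h
    · subst h
      have : (([[Sum.inl 2]] : Prog)).getD 0 [] = [Sum.inl 2] := rfl
      rw [this] at hj
      simp at hj
    · rw [List.getD_eq_default _ _ (by simp; omega)] at hj
      cases hj
  · intro b hb
    simp at hb
    subst hb
    simp

lemma base_eval : evalP [[Sum.inl 2]] 0 = [2] := by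
  rw [evalP_eq]
  rfl

lemma two_mul_le_aux : ∀ n : ℕ, 2 * (n + 4) ≤ 2 ^ (n + 3) + 1 := by
  intro n
  induction n with
  | zero => norm_num
  | succ n IH =>
    have h1 : (2:ℕ) ^ (n + 1 + 3) = 2 * 2 ^ (n + 3) := by ring
    have h2 : 2 ≤ 2 ^ (n + 3) := by
      calc 2 = 2 ^ 1 := by norm_num
        _ ≤ 2 ^ (n + 3) := Nat.pow_le_pow_right (by norm_num) (by omega)
    omega

lemma mk'_pos {k : ℕ} (hk : 2 ≤ k) (hk3 : k ≠ 3) : 1 ≤ mk' k := by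
  rw [mk']
  by_cases hbig : 9 ≤ k
  · set L := Nat.clog 2 k with hL
    have hL4 : 4 ≤ L := by
      have h9 : (2:ℕ) ^ 3 < k := by norm_num; omega
      have : 3 < Nat.clog 2 k := (Nat.lt_clog_iff_pow_lt (by norm_num)).2 h9
      omega
    have hpred : 2 ^ (L - 1) < k := Nat.pow_pred_clog_lt_self (by norm_num) (by omega)
    have haux := two_mul_le_aux (L - 4)
    have haux' : 2 * L ≤ 2 ^ (L - 1) + 1 := by
      have h1 : L - 4 + 4 = L := by omega
      have h2 : L - 4 + 3 = L - 1 := by omega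
      rw [h1, h2] at haux
      exact haux
    have hkL : L ≤ k - L := by omega
    have h2L : 2 ^ L ≤ 2 ^ (k - L) := Nat.pow_le_pow_right (by norm_num) hkL
    have hlt : L < 2 ^ L := Nat.lt_two_pow_self
    omega
  · interval_cases k
    · rw [show Nat.clog 2 2 = 1 from clog2_eq (by norm_num) (by norm_num) (by norm_num)]
      norm_num
    · omega
    · rw [show Nat.clog 2 4 = 2 from clog2_eq (by norm_num) (by norm_num) (by norm_num)]
      norm_num
    · rw [show Nat.clog 2 5 = 3 from clog2_eq (by norm_num) (by norm_num) (by norm_num)]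
      norm_num
    · rw [show Nat.clog 2 6 = 3 from clog2_eq (by norm_num) (by norm_num) (by norm_num)]
      norm_num
    · rw [show Nat.clog 2 7 = 3 from clog2_eq (by norm_num) (by norm_num) (by norm_num)]
      norm_num
    · rw [show Nat.clog 2 8 = 3 from clog2_eq (by norm_num) (by norm_num) (by norm_num)]
      norm_num

lemma g_sk_of_ne {k : ℕ} (hk : 2 ≤ k) (hk3 : k ≠ 3) : g (sk k) ≤ 100 * k := by
  set L := Nat.clog 2 k with hLdef
  set m := mk' k with hmdef
  have hm1 : 1 ≤ m := mk'_pos hk hk3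
  have hL1 : 1 ≤ L := Nat.clog_pos (by norm_num) hk
  have hkL : k ≤ 2 ^ L := Nat.le_pow_clog (by norm_num) k
  have hLk : L ≤ k := by
    calc L ≤ Nat.clog 2 (2 ^ k) := Nat.clog_mono_right 2 (le_of_lt Nat.lt_two_pow_self)
      _ = k := Nat.clog_pow 2 k (by norm_num)
  have hmlt : m < 2 ^ k := by
    have h1 : 2 ^ (k - L) ≤ 2 ^ (k - 1) := Nat.pow_le_pow_right (by norm_num) (by omega)
    have h2 : 2 ^ (k - 1) < 2 ^ k := Nat.pow_lt_pow_right (by norm_num) (by omega)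
    have h3 : m = 2 ^ (k - L) - L := by rw [hmdef, mk', ← hLdef]
    omega
  -- step 0 : a^m
  obtain ⟨p0_pre, p0_good, p0_len, p0_eval⟩ :=
    powExt_spec [[Sum.inl 2]] 0 (by simp) base_good m hm1
  set P0 := powExt [[Sum.inl 2]] 0 m with hP0
  have p0_size : sizeSum P0 ≤ 3 * k + 2 := by
    have h := powExt_size [[Sum.inl 2]] 0 k m hmlt
    rw [← hP0] at h
    have hbase : sizeSum [[Sum.inl 2]] = 1 := rfl
    omega
  set im := P0.length - 1 with him
  have him_lt : im < P0.length := by omega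
  have him_eval : evalP P0 im = List.replicate m 2 := by
    rw [p0_eval, base_eval, join_eq_flatten, flatten_replicate_singleton]
  -- step 1 : uk
  obtain ⟨w_pre, w_le, w_lt, w_good, w_eval, w_size, -⟩ :=
    wBuild_spec L hL1 k im P0 (by omega) hkL p0_good him_lt
  set r := wBuild L k im P0 with hr
  have hr_eval : evalP r.1 r.2 = uk k := by
    rw [w_eval, him_eval, uk_eq_Ww, ← hLdef, ← hmdef]
  -- step 2 : a^(m+1)
  set P2 : Prog := r.1 ++ [[.inr im, .inl 2]] with hP2
  have him_r : im < r.1.length := by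
    have := w_pre.length_le
    omega
  have hrefs2 : ∀ j, Sum.inr j ∈ ([.inr im, .inl 2] : Blk) → j < r.1.length := by
    intro j hj
    simp at hj
    omega
  have p2_good : Good P2 := good_snoc w_good (by simp) hrefs2
  have p2_eval : evalP P2 r.1.length = List.replicate (m + 1) 2 := by
    rw [hP2, evalP_snoc hrefs2]
    show evalP r.1 im ++ ([2] ++ []) = _
    rw [evalP_prefix w_pre him_lt, him_eval, List.append_nil, ← List.replicate_succ']
  have hp2size : sizeSum P2 = sizeSum r.1 + 2 := by
    rw [hP2, sizeSum_snoc]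
    rfl
  -- step 3 : B = uk ++ a^(m+1)
  set P3 : Prog := P2 ++ [[.inr r.2, .inr (r.1.length)]] with hP3
  have hlenP2 : P2.length = r.1.length + 1 := by simp [hP2]
  have hrefs3 : ∀ j, Sum.inr j ∈ ([.inr r.2, .inr (r.1.length)] : Blk) → j < P2.length := by
    intro j hj
    simp at hj
    rcases hj with h | h <;> omega
  have p3_good : Good P3 := good_snoc p2_good (by simp) hrefs3
  have hP2r2 : evalP P2 r.2 = uk k := by
    rw [hP2, evalP_prefix (List.prefix_append _ _) (by omega : r.2 < r.1.length), hr_eval]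
  have p3_eval : evalP P3 P2.length = uk k ++ List.replicate (m + 1) 2 := by
    rw [hP3, evalP_snoc hrefs3]
    show evalP P2 r.2 ++ (evalP P2 r.1.length ++ []) = _
    rw [hP2r2, p2_eval, List.append_nil]
  have p3_size : sizeSum P3 = sizeSum r.1 + 4 := by
    rw [hP3, sizeSum_snoc, hp2size]
    rfl
  have hlenP3 : P3.length = P2.length + 1 := by simp [hP3]
  -- step 4 : (uk ++ a^(m+1))^m
  obtain ⟨p4_pre, p4_good, p4_len, p4_eval⟩ :=
    powExt_spec P3 P2.length (by omega) p3_good m hm1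
  set P4 := powExt P3 P2.length m with hP4
  have p4_size : sizeSum P4 ≤ sizeSum P3 + 3 * k + 1 := by
    have h := powExt_size P3 P2.length k m hmlt
    rw [← hP4] at h
    omega
  -- step 5 : sk
  set P5 : Prog := P4 ++ [[.inr (P4.length - 1), .inr r.2]] with hP5
  have hr2P4 : r.2 < P4.length := by
    have h1 := p4_pre.length_le
    omega
  have hrefs5 : ∀ j, Sum.inr j ∈ ([.inr (P4.length - 1), .inr r.2] : Blk) → j < P4.length := by
    intro j hj
    simp at hj
    rcases hj with h | h <;> omega
  have p5_good : Good P5 := good_snoc p4_good (by simp) hrefs5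
  have p5_eval : evalP P5 P4.length = sk k := by
    rw [hP5, evalP_snoc hrefs5]
    show evalP P4 (P4.length - 1) ++ (evalP P4 r.2 ++ []) = _
    have hrr : evalP P4 r.2 = uk k := by
      have hpre : r.1 <+: P4 := ((List.prefix_append _ _).trans (List.prefix_append _ _)).trans p4_pre
      rw [evalP_prefix hpre (by omega), hr_eval]
    rw [p4_eval, p3_eval, hrr, List.append_nil, sk, ← hmdef]
  have p5_size : sizeSum P5 = sizeSum P4 + 2 := by
    rw [hP5, sizeSum_snoc]
    rfl
  -- conclusion
  have hglast : g (evalP P5 (P5.length - 1)) ≤ sizeSum P5 :=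
    g_le_prog P5 p5_good (by simp [hP5])
  have hlast : P5.length - 1 = P4.length := by simp [hP5]
  rw [hlast, p5_eval] at hglast
  have htotal : sizeSum P5 ≤ 100 * k := by
    have h9L : 9 * L ≤ 9 * k := by omega
    omega
  omega

/-- There is an absolute constant `C` with `g(s_k) ≤ C·k` for all `k ≥ 2`. -/
theorem g_sk_linear : ∃ C : ℕ, ∀ k : ℕ, 2 ≤ k → g (sk k) ≤ C * k := by
  refine ⟨100, fun k hk => ?_⟩
  by_cases hk3 : k = 3
  · subst hk3
    have hc : Nat.clog 2 3 = 2 := clog2_eq (by norm_num) (by norm_num) (by norm_num)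
    have hm : mk' 3 = 0 := by rw [mk', hc]; norm_num
    have hsk : sk 3 = [0, 0, 0, 1, 1, 0] := by
      rw [sk, hm, uk, hc, hm]
      decide
    rw [hsk]
    exact (g_le_length (by decide)).trans (by norm_num)
  · exact g_sk_of_ne hk hk3
end

section
/- For every k ≥ 2, when the word s_k = (u_k a^{m_k+1})^{m_k} u_k (with u_k and m_k as defined from k) is split into consecutive non-overlapping blocks of length m_k + ⌈log₂ k⌉ = 2^{k−⌈log₂ k⌉}, the set of blocks that occur is exactly F_k = { a^i bin_k(j) a^{m_k − i} : 0 ≤ j ≤ k−1, 0 ≤ i ≤ m_k }, and |F_k| = (m_k + 1)·k. -/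
namespace SkAux

open List

lemma two_mul_le_two_pow (n : ℕ) : 2 * n ≤ 2 ^ n := by
  induction n with
  | zero => simp
  | succ n ih =>
    rcases Nat.eq_zero_or_pos n with h | h
    · subst h; norm_num
    · have h2 : 2 ≤ 2 ^ n := by
        calc 2 ≤ 2 * n := by omega
        _ ≤ 2 ^ n := ih
      calc 2 * (n + 1) = 2 * n + 2 := by ring
      _ ≤ 2 ^ n + 2 ^ n := by omega
      _ = 2 ^ (n + 1) := by ring

lemma clog_le_pow (k : ℕ) (hk : 2 ≤ k) :
    Nat.clog 2 k ≤ 2 ^ (k - Nat.clog 2 k) := by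
  set L := Nat.clog 2 k with hL
  have hL1 : 1 ≤ L := Nat.clog_pos (by norm_num) hk
  have h1 : 2 ^ (L - 1) < k := Nat.pow_pred_clog_lt_self (by norm_num) (by omega)
  have h2 : L - 1 < 2 ^ (L - 1) := Nat.lt_two_pow_self
  have hLk : L < k := by omega
  have h3 : k - L < 2 ^ (k - L) := Nat.lt_two_pow_self
  have h4 : 2 * (L - 1) ≤ 2 ^ (L - 1) := two_mul_le_two_pow _
  omega

lemma mk_add (k : ℕ) (hk : 2 ≤ k) :
    mk' k + Nat.clog 2 k = 2 ^ (k - Nat.clog 2 k) := by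
  have := clog_le_pow k hk
  unfold mk'
  omega

/-- The `t`-th block. -/
def blk (k t : ℕ) : List (Fin 3) :=
  List.replicate (t / k) (2 : Fin 3) ++ binpad (Nat.clog 2 k) (t % k) ++
    List.replicate (mk' k - t / k) 2

@[simp] lemma binpad_length (L j : ℕ) : (binpad L j).length = L := by
  simp [binpad]

lemma blk_length (k t : ℕ) (hk : 2 ≤ k) (ht : t < (mk' k + 1) * k) :
    (blk k t).length = 2 ^ (k - Nat.clog 2 k) := by
  have hk0 : 0 < k := by omega
  have hdiv : t / k ≤ mk' k := by
    have := (Nat.div_lt_iff_lt_mul hk0).2 ht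
    omega
  have := mk_add k hk
  simp [blk]
  omega

/-- generic: blocks of a join of equal-length words -/
lemma join_drop_take {α : Type*} (B : ℕ) :
    ∀ (l : List (List α)) (h : ∀ x ∈ l, x.length = B) (t : ℕ) (ht : t < l.length),
      ((l.flatten).drop (t * B)).take B = l[t] := by
  intro l
  induction l with
  | nil => intro h t ht; simp at ht
  | cons x l ih =>
    intro h t ht
    have hx : x.length = B := h x (by simp)
    cases t with
    | zero =>
      simp only [Nat.zero_mul, List.drop_zero, List.flatten_cons]
      rw [← hx, List.take_left]
      rfl
    | succ t =>
      have : (t + 1) * B = x.length + t * B := by rw [hx]; ring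
      rw [List.flatten_cons, this, List.drop_length_add_append]
      have := ih (fun y hy => h y (by simp [hy])) t (by simpa using ht)
      simpa using this

lemma join_length {α : Type*} (B : ℕ) :
    ∀ (l : List (List α)) (h : ∀ x ∈ l, x.length = B),
      l.flatten.length = l.length * B := by
  intro l
  induction l with
  | nil => simp
  | cons x l ih =>
    intro h
    simp only [List.flatten_cons, List.length_append, List.length_cons]
    rw [h x (by simp), ih (fun y hy => h y (by simp [hy]))]
    ring

/-- splitting a range-map-join by groups -/
lemma range_mul_join {β : Type*} (f : ℕ → List β) (b : ℕ) :
    ∀ (a : ℕ), ((List.range (a * b)).map f).flatten =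
      ((List.range a).map (fun i => ((List.range b).map (fun j => f (i * b + j))).flatten)).flatten := by
  intro a
  induction a with
  | zero => simp
  | succ a ih =>
    have : (a + 1) * b = a * b + b := by ring
    rw [this, List.range_add, List.map_append, List.flatten_append, ih,
      List.range_succ, List.map_append, List.flatten_append]
    simp [List.map_map, Function.comp_def]


lemma row_eq (k i : ℕ) (hi : i ≤ mk' k) :
    ∀ n, 1 ≤ n → n ≤ k →
      ((List.range n).map (fun j => List.replicate i (2:Fin 3) ++
          binpad (Nat.clog 2 k) j ++ List.replicate (mk' k - i) 2)).flatten
        = List.replicate i (2:Fin 3) ++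
          (((List.range (n-1)).map (fun j => binpad (Nat.clog 2 k) j ++
              List.replicate (mk' k) 2)).flatten ++ binpad (Nat.clog 2 k) (n-1)) ++
          List.replicate (mk' k - i) 2 := by
  have hrep2 : ∀ X : List (Fin 3), List.replicate (mk' k - i) 2 ++
      (List.replicate i 2 ++ X) = List.replicate (mk' k) 2 ++ X := by
    intro X
    rw [← List.append_assoc, ← List.replicate_add]
    congr 2
    omega
  intro n
  induction n with
  | zero => intro h; omega
  | succ n ih =>
    intro _ hn
    rcases Nat.eq_zero_or_pos n with h0 | h0
    · subst h0; simp [List.range_succ]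
    · rw [List.range_succ, List.map_append, List.flatten_append,
        ih (by omega) (by omega)]
      have h2 : n - 1 + 1 = n := by omega
      conv_rhs => rw [Nat.succ_sub_one, ← h2, List.range_succ, h2]
      simp only [List.map_append, List.flatten_append, List.map_cons,
        List.map_nil, List.flatten_cons, List.flatten_nil, List.append_nil,
        List.append_assoc, hrep2]

lemma rows_eq (k : ℕ) :
    ∀ n, 1 ≤ n → n ≤ mk' k + 1 →
      ((List.range n).map (fun i => List.replicate i (2:Fin 3) ++ uk k ++
          List.replicate (mk' k - i) 2)).flatten
        = (List.replicate (n-1) (uk k ++ List.replicate (mk' k + 1) (2:Fin 3))).flatten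
            ++ uk k ++ List.replicate (mk' k + 1 - n) 2 := by
  intro n
  induction n with
  | zero => intro h; omega
  | succ n ih =>
    intro _ hn
    rcases Nat.eq_zero_or_pos n with h0 | h0
    · subst h0; simp [List.range_succ]
    · have hrep2 : ∀ X : List (Fin 3), List.replicate (mk' k + 1 - n) 2 ++
          (List.replicate n 2 ++ X) = List.replicate (mk' k + 1) 2 ++ X := by
        intro X
        rw [← List.append_assoc, ← List.replicate_add]
        congr 2
        omega
      rw [List.range_succ, List.map_append, List.flatten_append,
        ih (by omega) (by omega)]
      have h2 : n - 1 + 1 = n := by omega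
      conv_rhs => rw [Nat.succ_sub_one, ← h2, List.replicate_succ', h2]
      simp only [List.map_cons, List.map_nil, List.flatten_cons, List.flatten_nil,
        List.flatten_append, List.append_nil, List.append_assoc, hrep2]
      have h3 : mk' k + 1 - (n + 1) = mk' k - n := by omega
      rw [h3]

lemma blk_apply (k i j : ℕ) (hk0 : 0 < k) (hj : j < k) :
    blk k (i * k + j) = List.replicate i (2:Fin 3) ++ binpad (Nat.clog 2 k) j ++
      List.replicate (mk' k - i) 2 := by
  have hd : (i * k + j) / k = i := by
    rw [Nat.mul_comm, Nat.add_comm, Nat.add_mul_div_left _ _ hk0]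
    simp [Nat.div_eq_of_lt hj]
  have hm : (i * k + j) % k = j := by
    rw [Nat.mul_comm, Nat.add_comm, Nat.add_mul_mod_self_left,
      Nat.mod_eq_of_lt hj]
  rw [blk, hd, hm]

lemma sk_eq (k : ℕ) (hk : 2 ≤ k) :
    sk k = ((List.range ((mk' k + 1) * k)).map (blk k)).flatten := by
  have hk0 : 0 < k := by omega
  rw [range_mul_join]
  have hinner : ∀ i ∈ List.range (mk' k + 1),
      ((List.range k).map (fun j => blk k (i * k + j))).flatten
        = List.replicate i (2:Fin 3) ++ uk k ++ List.replicate (mk' k - i) 2 := by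
    intro i hi
    rw [List.mem_range] at hi
    have hmap : ((List.range k).map (fun j => blk k (i * k + j)))
        = (List.range k).map (fun j => List.replicate i (2:Fin 3) ++
            binpad (Nat.clog 2 k) j ++ List.replicate (mk' k - i) 2) := by
      apply List.map_congr_left
      intro j hj
      rw [List.mem_range] at hj
      exact blk_apply k i j hk0 hj
    rw [hmap, row_eq k i (by omega) k (by omega) (le_refl k)]
    rfl
  rw [List.map_congr_left hinner, rows_eq k (mk' k + 1) (by omega) (le_refl _)]
  simp [sk]


lemma sk_length (k : ℕ) (hk : 2 ≤ k) :
    (sk k).length = (mk' k + 1) * k * 2 ^ (k - Nat.clog 2 k) := by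
  rw [sk_eq k hk, join_length (2 ^ (k - Nat.clog 2 k))]
  · simp
  · intro x hx
    rw [List.mem_map] at hx
    obtain ⟨t, ht, rfl⟩ := hx
    exact blk_length k t hk (List.mem_range.mp ht)

lemma sk_block (k t : ℕ) (hk : 2 ≤ k) (ht : t < (mk' k + 1) * k) :
    (((sk k).drop (t * 2 ^ (k - Nat.clog 2 k))).take (2 ^ (k - Nat.clog 2 k)))
      = blk k t := by
  rw [sk_eq k hk]
  have hmem : ∀ x ∈ (List.range ((mk' k + 1) * k)).map (blk k),
      x.length = 2 ^ (k - Nat.clog 2 k) := by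
    intro x hx
    rw [List.mem_map] at hx
    obtain ⟨t', ht', rfl⟩ := hx
    exact blk_length k t' hk (List.mem_range.mp ht')
  rw [join_drop_take _ _ hmem t (by simpa using ht)]
  simp [List.getElem_map, List.getElem_range]

lemma binpad_head (L j : ℕ) (hL : 0 < L) :
    binpad L j = (if Nat.testBit j (L - 1) then (1:Fin 3) else 0) ::
      (List.range (L-1)).map
        (fun t => if Nat.testBit j (L - 1 - (t+1)) then (1:Fin 3) else 0) := by
  obtain ⟨n, rfl⟩ : ∃ n, L = n + 1 := ⟨L-1, by omega⟩
  unfold binpad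
  rw [List.range_succ_eq_map, List.map_cons, List.map_map]
  simp [Function.comp_def]

lemma takeWhile_block (k : ℕ) (hk : 2 ≤ k) (i j r : ℕ) :
    ((List.replicate i (2:Fin 3) ++ binpad (Nat.clog 2 k) j ++
        List.replicate r 2).takeWhile (· == 2)).length = i := by
  rw [List.append_assoc, List.takeWhile_append_of_pos (by
    intro a ha
    have := List.eq_of_mem_replicate ha
    simp [this])]
  have hL : 0 < Nat.clog 2 k := Nat.clog_pos (by norm_num) hk
  rw [binpad_head _ _ hL]
  cases h : Nat.testBit j (Nat.clog 2 k - 1) <;>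
    simp [h, List.takeWhile_cons]

lemma binpad_inj (k j j' : ℕ) (hk : 2 ≤ k) (hj : j < k) (hj' : j' < k)
    (h : binpad (Nat.clog 2 k) j = binpad (Nat.clog 2 k) j') : j = j' := by
  set L := Nat.clog 2 k with hLdef
  have hL : 0 < L := Nat.clog_pos (by norm_num) hk
  have hkL : k ≤ 2 ^ L := Nat.le_pow_clog (by norm_num) k
  apply Nat.eq_of_testBit_eq
  intro b
  rcases lt_or_ge b L with hb | hb
  · have hlt : L - 1 - b < L := by omega
    have e1 := List.getElem_of_eq h (i := L - 1 - b)
      (by rw [binpad_length]; exact hlt)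
    simp only [binpad, List.getElem_map, List.getElem_range] at e1
    have ht : L - 1 - (L - 1 - b) = b := by omega
    rw [ht] at e1
    cases h1 : Nat.testBit j b <;> cases h2 : Nat.testBit j' b <;>
      simp [h1, h2] at e1 ⊢
  · have h1 : j < 2 ^ b :=
      lt_of_lt_of_le (lt_of_lt_of_le hj hkL) (Nat.pow_le_pow_right (by norm_num) hb)
    have h2 : j' < 2 ^ b :=
      lt_of_lt_of_le (lt_of_lt_of_le hj' hkL) (Nat.pow_le_pow_right (by norm_num) hb)
    rw [Nat.testBit_lt_two_pow h1, Nat.testBit_lt_two_pow h2]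

lemma block_injOn (k : ℕ) (hk : 2 ≤ k) (i i' j j' : ℕ)
    (hj : j < k) (hj' : j' < k)
    (h : List.replicate i (2:Fin 3) ++ binpad (Nat.clog 2 k) j ++
          List.replicate (mk' k - i) 2
        = List.replicate i' (2:Fin 3) ++ binpad (Nat.clog 2 k) j' ++
          List.replicate (mk' k - i') 2) : i = i' ∧ j = j' := by
  have hii : i = i' := by
    have t1 := takeWhile_block k hk i j (mk' k - i)
    have t2 := takeWhile_block k hk i' j' (mk' k - i')
    rw [h] at t1
    omega
  subst hii
  refine ⟨rfl, ?_⟩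
  have h2 : List.replicate i (2:Fin 3) ++ binpad (Nat.clog 2 k) j
      = List.replicate i (2:Fin 3) ++ binpad (Nat.clog 2 k) j' :=
    List.append_cancel_right h
  exact binpad_inj k j j' hk hj hj' (List.append_cancel_left h2)

end SkAux
/-- Splitting `s_k` into consecutive blocks of length `2^{k-⌈log₂ k⌉}` yields exactly
the set `F_k = { aⁱ bin_k(j) a^{m_k-i} : 0 ≤ j ≤ k-1, 0 ≤ i ≤ m_k }`, which has
`(m_k + 1)·k` elements. -/
theorem sk_blocks (k : ℕ) (hk : 2 ≤ k) :
    ((List.range ((sk k).length / 2 ^ (k - Nat.clog 2 k))).map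
        (fun t => (((sk k).drop (t * 2 ^ (k - Nat.clog 2 k))).take
          (2 ^ (k - Nat.clog 2 k))))).toFinset
      = (Finset.range (mk' k + 1) ×ˢ Finset.range k).image
          (fun p => List.replicate p.1 (2 : Fin 3) ++ binpad (Nat.clog 2 k) p.2 ++
            List.replicate (mk' k - p.1) 2) ∧
    ((Finset.range (mk' k + 1) ×ˢ Finset.range k).image
          (fun p => List.replicate p.1 (2 : Fin 3) ++ binpad (Nat.clog 2 k) p.2 ++
            List.replicate (mk' k - p.1) 2)).card = (mk' k + 1) * k := by
  open SkAux in
  have hk0 : 0 < k := by omega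
  have hBpos : 0 < 2 ^ (k - Nat.clog 2 k) := Nat.pow_pos (by norm_num)
  have hdiv : (sk k).length / 2 ^ (k - Nat.clog 2 k) = (mk' k + 1) * k := by
    rw [sk_length k hk, Nat.mul_div_cancel _ hBpos]
  constructor
  · rw [hdiv]
    ext x
    simp only [List.mem_toFinset, List.mem_map, List.mem_range, Finset.mem_image,
      Finset.mem_product, Finset.mem_range, Prod.exists]
    constructor
    · rintro ⟨t, ht, rfl⟩
      refine ⟨t / k, t % k, ⟨?_, Nat.mod_lt _ hk0⟩, ?_⟩
      · exact (Nat.div_lt_iff_lt_mul hk0).2 ht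
      · rw [sk_block k t hk ht]
        rfl
    · rintro ⟨i, j, ⟨hi, hj⟩, rfl⟩
      have hik : (i + 1) * k ≤ (mk' k + 1) * k := Nat.mul_le_mul_right _ (by omega)
      have he : (i + 1) * k = i * k + k := by ring
      refine ⟨i * k + j, by omega, ?_⟩
      rw [sk_block k _ hk (by omega), blk_apply k i j hk0 hj]
  · have hinj : Set.InjOn
        (fun p : ℕ × ℕ => List.replicate p.1 (2 : Fin 3) ++
          binpad (Nat.clog 2 k) p.2 ++ List.replicate (mk' k - p.1) 2)
        ↑(Finset.range (mk' k + 1) ×ˢ Finset.range k) := by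
      rintro ⟨i, j⟩ hp ⟨i', j'⟩ hq h
      simp only [Finset.coe_product, Set.mem_prod, Finset.mem_coe,
        Finset.mem_range] at hp hq
      obtain ⟨h1, h2⟩ := block_injOn k hk i i' j j' hp.2 hq.2 h
      simp [h1, h2]
    rw [Finset.card_image_of_injOn hinj, Finset.card_product,
      Finset.card_range, Finset.card_range]
end
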